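/- In the sparse sign-consistent JL construction with per-column uniform supports (and n ≥ 2), let p be an integer with 1 ≤ p < s. Then there exist universal constants c₁, c₂ > 0 such that c₁·‖X‖_p ≤ ‖Q_{1,2}‖_p ≤ c₂·‖X‖_p, where X is a random variable with the binomial distribution Bin(s, s/m). -/

import Mathlib

open MeasureTheory ProbabilityTheory Finset Real

/-- The `p`-th moment norm `(E|Y|^p)^(1/p)` of a real random variable. -/
noncomputable def pnorm {Ω : Type*} [MeasureSpace Ω] (Y : Ω → ℝ) (p : ℝ) : ℝ :=
  (∫ ω, |Y ω| ^ p) ^ (1 / p)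

/-- The hash variables `η` of the sparse, sign-consistent JL construction with per-column
uniform supports: independently for each column, the set of rows where the column equals `1`
is a uniformly random `s`-element subset of the `m` rows. -/
structure UnifSSCJL (Ω : Type) [MeasureSpace Ω] (n m s : ℕ) where
  η : Fin m → Fin n → Ω → ℝ
  meas_eta : ∀ r i, Measurable (η r i)
  eta01 : ∀ r i ω, η r i ω = 0 ∨ η r i ω = 1
  cols_indep : iIndepFun (fun i ω => fun r => η r i ω) ℙ
  unif : ∀ (i : Fin n) (S : Finset (Fin m)), S.card = s →
    ℙ {ω | ∀ r, η r i ω = 1 ↔ r ∈ S} = (Nat.choose m s : ENNReal)⁻¹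

/-- `Q i j` is the number of collisions between the nonzero entries of columns `i` and `j`. -/
noncomputable def UnifSSCJL.Q {Ω : Type} [MeasureSpace Ω] {n m s : ℕ} (c : UnifSSCJL Ω n m s)
    (i j : Fin n) (ω : Ω) : ℝ :=
  ∑ r, c.η r i ω * c.η r j ω

/-- `X` has the binomial distribution `Bin(N, α)` (as a real-valued random variable). -/
def HasBinomialDist {Ω : Type*} [MeasureSpace Ω] (X : Ω → ℝ) (N : ℕ) (α : ℝ) : Prop :=
  ∀ k : ℕ, ℙ {ω | X ω = (k : ℝ)} =
    ENNReal.ofReal ((N.choose k : ℝ) * α ^ k * (1 - α) ^ (N - k))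


section Aux


/-- Stirling numbers of the second kind. -/
def St : ℕ → ℕ → ℕ
  | 0, 0 => 1
  | 0, _+1 => 0
  | _+1, 0 => 0
  | p+1, j+1 => (j+1) * St p (j+1) + St p j

lemma St_zero_succ (j : ℕ) : St 0 (j+1) = 0 := rfl
lemma St_succ_zero (p : ℕ) : St (p+1) 0 = 0 := rfl
lemma St_succ_succ (p j : ℕ) : St (p+1) (j+1) = (j+1) * St p (j+1) + St p j := rfl

lemma St_eq_zero : ∀ p j, p < j → St p j = 0
  | 0, j+1, _ => rfl
  | p+1, j+1, h => by
      rw [St_succ_succ, St_eq_zero p (j+1) (by omega), St_eq_zero p j (by omega)]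
      simp

lemma mul_descFactorial (k j : ℕ) :
    k * k.descFactorial j = k.descFactorial (j+1) + j * k.descFactorial j := by
  rw [Nat.descFactorial_succ]
  rcases le_or_gt j k with h | h
  · have : k - j + j = k := by omega
    nlinarith [Nat.sub_add_cancel h]
  · rw [Nat.descFactorial_eq_zero_iff_lt.2 h]
    simp

/-- `k^p = ∑_j St p j (k)_j`. -/
lemma pow_eq_sum_St (k p : ℕ) :
    k ^ p = ∑ j ∈ range (p+1), St p j * k.descFactorial j := by
  induction p with
  | zero => simp [St]
  | succ p ih =>
    have : k ^ (p+1) = ∑ j ∈ range (p+1), St p j * (k * k.descFactorial j) := by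
      rw [pow_succ, ih, Finset.sum_mul]
      congr 1; ext j; ring
    rw [this]
    have expand : ∀ j, St p j * (k * k.descFactorial j)
        = St p j * k.descFactorial (j+1) + j * (St p j * k.descFactorial j) := by
      intro j; rw [mul_descFactorial]; ring
    simp_rw [expand]
    rw [Finset.sum_add_distrib]
    -- RHS: ∑_{j ∈ range (p+2)} St (p+1) j * (k)_j
    rw [Finset.sum_range_succ' (fun j => St (p+1) j * k.descFactorial j) (p+1)]
    simp only [St_succ_zero, Nat.zero_mul, Nat.add_zero, St_succ_succ]
    have key : ∑ x ∈ range (p+1), (x+1) * St p (x+1) * k.descFactorial (x+1)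
        = ∑ x ∈ range (p+1), x * (St p x * k.descFactorial x) := by
      have h2 := Finset.sum_range_succ' (fun x => x * St p x * k.descFactorial x) (p+1)
      rw [Finset.sum_range_succ] at h2
      simp only [St_eq_zero p (p+1) (lt_add_one p)] at h2
      simp only [Nat.mul_zero, Nat.zero_mul, Nat.add_zero] at h2
      rw [← h2]
      apply Finset.sum_congr rfl; intro x _; ring
    have rhs_eq : ∑ x ∈ range (p+1), ((x+1) * St p (x+1) + St p x) * k.descFactorial (x+1)
        = ∑ x ∈ range (p+1), ((x+1) * St p (x+1) * k.descFactorial (x+1)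
            + St p x * k.descFactorial (x+1)) := by
      apply Finset.sum_congr rfl; intros; ring
    rw [rhs_eq, Finset.sum_add_distrib, key]
    ring
  

/-- `C(s,k) * (k)_j = (s)_j * C(s-j, k-j)` for `j ≤ k ≤ s`. -/
lemma choose_mul_descFactorial_nat {s k j : ℕ} (hjk : j ≤ k) (hks : k ≤ s) :
    s.choose k * k.descFactorial j = s.descFactorial j * (s-j).choose (k-j) := by
  have h1 : s.choose k * k.descFactorial j * ((k-j).factorial * (s-k).factorial)
      = s.descFactorial j * (s-j).choose (k-j) * ((k-j).factorial * (s-k).factorial) := by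
    have e1 : k.descFactorial j * (k-j).factorial = k.factorial := by
      rw [mul_comm]; exact Nat.factorial_mul_descFactorial hjk
    have e2 : (s-j).choose (k-j) * (k-j).factorial * ((s-j)-(k-j)).factorial
        = (s-j).factorial := Nat.choose_mul_factorial_mul_factorial (by omega)
    have e3 : (s-j)-(k-j) = s - k := by omega
    have e4 : s.descFactorial j * (s-j).factorial = s.factorial := by
      rw [mul_comm]; exact Nat.factorial_mul_descFactorial (le_trans hjk hks)
    have e5 : s.choose k * k.factorial * (s-k).factorial = s.factorial :=
      Nat.choose_mul_factorial_mul_factorial hks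
    calc s.choose k * k.descFactorial j * ((k-j).factorial * (s-k).factorial)
        = s.choose k * (k.descFactorial j * (k-j).factorial) * (s-k).factorial := by ring
      _ = s.factorial := by rw [e1]; exact e5
      _ = s.descFactorial j * (s-j).factorial := e4.symm
      _ = s.descFactorial j * ((s-j).choose (k-j) * (k-j).factorial * ((s-j)-(k-j)).factorial) := by
          rw [e2]
      _ = s.descFactorial j * (s-j).choose (k-j) * ((k-j).factorial * (s-k).factorial) := by
          rw [e3]; ring
  exact Nat.eq_of_mul_eq_mul_right (by positivity) h1

/-- Binomial factorial moments: `∑_k C(s,k) α^k (1-α)^{s-k} (k)_j = (s)_j α^j`. -/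
lemma binomial_descFactorial_moment (s j : ℕ) (hj : j ≤ s) (α : ℝ) :
    ∑ k ∈ range (s+1), (s.choose k : ℝ) * α^k * (1-α)^(s-k) * (k.descFactorial j : ℝ)
      = (s.descFactorial j : ℝ) * α^j := by
  have hsplit : range (s+1) = range j ∪ Finset.Ico j (s+1) := by
    rw [Finset.range_eq_Ico, ← Finset.Ico_union_Ico_eq_Ico (Nat.zero_le j) (by omega), Finset.range_eq_Ico]
  rw [hsplit, Finset.sum_union (by
    rw [Finset.range_eq_Ico]; exact Finset.Ico_disjoint_Ico_consecutive 0 j (s+1))]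
  have hz : ∑ k ∈ range j, (s.choose k : ℝ) * α^k * (1-α)^(s-k) * (k.descFactorial j : ℝ) = 0 := by
    apply Finset.sum_eq_zero; intro k hk
    rw [Finset.mem_range] at hk
    rw [Nat.descFactorial_eq_zero_iff_lt.2 hk]
    simp
  rw [hz, zero_add]
  rw [Finset.sum_Ico_eq_sum_range]
  have : ∀ t ∈ range (s+1-j), (s.choose (j+t) : ℝ) * α^(j+t) * (1-α)^(s-(j+t))
        * ((j+t).descFactorial j : ℝ)
      = (s.descFactorial j : ℝ) * α^j * ((s-j).choose t * α^t * (1-α)^((s-j)-t)) := by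
    intro t ht
    rw [Finset.mem_range] at ht
    have h1 : s.choose (j+t) * (j+t).descFactorial j
        = s.descFactorial j * (s-j).choose t := by
      have := choose_mul_descFactorial_nat (j := j) (k := j+t) (s := s) (by omega) (by omega)
      simpa using this
    have h2 : s - (j+t) = (s-j) - t := by omega
    have := congrArg (fun x : ℕ => (x : ℝ)) h1
    push_cast at this
    calc (s.choose (j+t) : ℝ) * α^(j+t) * (1-α)^(s-(j+t)) * ((j+t).descFactorial j : ℝ)
        = ((s.choose (j+t) : ℝ) * ((j+t).descFactorial j : ℝ)) * (α^j * α^t)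
            * (1-α)^((s-j)-t) := by rw [h2, pow_add]; ring
      _ = ((s.descFactorial j : ℝ) * ((s-j).choose t : ℝ)) * (α^j * α^t)
            * (1-α)^((s-j)-t) := by rw [this]
      _ = (s.descFactorial j : ℝ) * α^j * ((s-j).choose t * α^t * (1-α)^((s-j)-t)) := by ring
  rw [Finset.sum_congr rfl this, ← Finset.mul_sum]
  have hbin : ∑ t ∈ range (s+1-j), ((s-j).choose t : ℝ) * α^t * (1-α)^((s-j)-t) = 1 := by
    have hrange : s+1-j = (s-j)+1 := by omega
    rw [hrange]
    calc ∑ t ∈ range ((s-j)+1), ((s-j).choose t : ℝ) * α^t * (1-α)^((s-j)-t)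
        = (α + (1-α))^(s-j) := by
          rw [add_pow]; apply Finset.sum_congr rfl; intros; ring
      _ = 1 := by norm_num
  rw [hbin, mul_one]

lemma image_cons {p m : ℕ} (a : Fin m) (f : Fin p → Fin m) :
    Finset.image (Fin.cons a f : Fin (p+1) → Fin m) Finset.univ
      = insert a (Finset.image f Finset.univ) := by
  ext b
  simp only [Finset.mem_image, Finset.mem_insert, Finset.mem_univ, true_and]
  constructor
  · rintro ⟨i, hi⟩
    rcases Fin.eq_zero_or_eq_succ i with h0 | ⟨i', rfl⟩
    · subst h0; left; rw [Fin.cons_zero] at hi; exact hi.symm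
    · right; exact ⟨i', by rwa [Fin.cons_succ] at hi⟩
  · rintro (rfl | ⟨i, hi⟩)
    · exact ⟨0, Fin.cons_zero _ _⟩
    · exact ⟨i.succ, by rwa [Fin.cons_succ]⟩

/-- Sums over tuples grouped by image cardinality. -/
lemma sum_fun_image_card (m : ℕ) : ∀ (p : ℕ) (g : ℕ → ℝ),
    ∑ f : Fin p → Fin m, g ((Finset.image f Finset.univ).card)
      = ∑ j ∈ range (p+1), (St p j : ℝ) * (m.descFactorial j : ℝ) * g j := by
  intro p
  induction p with
  | zero =>
    intro g
    simp [St]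
  | succ p ih =>
    intro g
    -- reindex by (a, f)
    rw [← Equiv.sum_comp (Fin.consEquiv (fun _ : Fin (p+1) => Fin m))
      (fun f : Fin (p+1) → Fin m => g ((Finset.image f Finset.univ).card))]
    rw [Fintype.sum_prod_type]
    rw [Finset.sum_comm]
    have he : ∀ (x : Fin m) (y : Fin p → Fin m),
        (Fin.consEquiv (fun _ : Fin (p+1) => Fin m)) (x, y) = Fin.cons x y := fun _ _ => rfl
    simp only [he]
    have inner : ∀ f : Fin p → Fin m,
        ∑ a : Fin m, g ((Finset.image (Fin.cons a f : Fin (p+1) → Fin m) Finset.univ).card)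
          = (fun j : ℕ => (j : ℝ) * g j + ((m - j : ℕ) : ℝ) * g (j+1))
              ((Finset.image f Finset.univ).card) := by
      intro f
      set T := Finset.image f Finset.univ with hT
      have : ∀ a : Fin m, g ((Finset.image (Fin.cons a f : Fin (p+1) → Fin m) Finset.univ).card)
          = g ((insert a T).card) := by intro a; rw [image_cons]
      rw [Finset.sum_congr rfl (fun a _ => this a)]
      rw [← Finset.sum_add_sum_compl T]
      have h1 : ∀ a ∈ T, g ((insert a T).card) = g T.card := by
        intro a ha; rw [Finset.insert_eq_self.2 ha]
      have h2 : ∀ a ∈ Tᶜ, g ((insert a T).card) = g (T.card + 1) := by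
        intro a ha; rw [Finset.card_insert_of_notMem (Finset.mem_compl.1 ha)]
      rw [Finset.sum_congr rfl h1, Finset.sum_congr rfl h2,
        Finset.sum_const, Finset.sum_const, Finset.card_compl]
      simp only [Fintype.card_fin, nsmul_eq_mul]
    rw [Finset.sum_congr rfl (fun f _ => inner f)]
    rw [ih (fun j : ℕ => (j : ℝ) * g j + ((m - j : ℕ) : ℝ) * g (j+1))]
    -- now pure algebra on Stirling sums
    have expand : ∀ j, (St p j : ℝ) * (m.descFactorial j : ℝ)
          * ((j : ℝ) * g j + ((m - j : ℕ) : ℝ) * g (j+1))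
        = (j : ℝ) * ((St p j : ℝ) * (m.descFactorial j : ℝ) * g j)
          + (St p j : ℝ) * (m.descFactorial (j+1) : ℝ) * g (j+1) := by
      intro j
      have : (m.descFactorial (j+1) : ℝ) = ((m - j : ℕ) : ℝ) * (m.descFactorial j : ℝ) := by
        rw [Nat.descFactorial_succ]; push_cast; ring
      rw [this]; ring
    rw [Finset.sum_congr rfl (fun j _ => expand j), Finset.sum_add_distrib]
    rw [Finset.sum_range_succ'
      (fun j => (St (p+1) j : ℝ) * (m.descFactorial j : ℝ) * g j) (p+1)]
    simp only [St_succ_zero, Nat.cast_zero, zero_mul, add_zero, St_succ_succ]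
    have rhs_eq : ∑ j ∈ range (p+1),
          ((((j:ℕ)+1) * St p (j+1) + St p j : ℕ) : ℝ) * (m.descFactorial (j+1) : ℝ) * g (j+1)
        = ∑ j ∈ range (p+1), (((j:ℝ)+1) * (St p (j+1) : ℝ) * (m.descFactorial (j+1) : ℝ) * g (j+1)
            + (St p j : ℝ) * (m.descFactorial (j+1) : ℝ) * g (j+1)) := by
      apply Finset.sum_congr rfl; intro j _; push_cast; ring
    rw [rhs_eq, Finset.sum_add_distrib]
    have key : ∑ j ∈ range (p+1), (((j:ℝ)+1) * (St p (j+1) : ℝ)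
          * (m.descFactorial (j+1) : ℝ) * g (j+1))
        = ∑ j ∈ range (p+1), (j : ℝ) * ((St p j : ℝ) * (m.descFactorial j : ℝ) * g j) := by
      have h2 := Finset.sum_range_succ'
        (fun j => (j : ℝ) * ((St p j : ℝ) * (m.descFactorial j : ℝ) * g j)) (p+1)
      rw [Finset.sum_range_succ] at h2
      simp only [St_eq_zero p (p+1) (lt_add_one p)] at h2
      simp only [Nat.cast_zero, zero_mul, mul_zero, add_zero, Nat.cast_succ] at h2
      calc ∑ j ∈ range (p+1), (((j:ℝ)+1) * (St p (j+1) : ℝ)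
            * (m.descFactorial (j+1) : ℝ) * g (j+1))
          = ∑ j ∈ range (p+1), ((j:ℝ)+1) * ((St p (j+1) : ℝ)
            * (m.descFactorial (j+1) : ℝ) * g (j+1)) := by
            apply Finset.sum_congr rfl; intro j _; push_cast; ring
        _ = ∑ j ∈ range (p+1), (j : ℝ) * ((St p j : ℝ) * (m.descFactorial j : ℝ) * g j) :=
            h2.symm
    rw [key]

lemma descFact_mul_pow_le {s m : ℕ} (h : s ≤ m) (j : ℕ) :
    s.descFactorial j * m^j ≤ s^j * m.descFactorial j := by
  rw [Nat.descFactorial_eq_prod_range, Nat.descFactorial_eq_prod_range]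
  have l1 : (∏ i ∈ range j, (s-i)) * m^j = ∏ i ∈ range j, ((s-i)*m) := by
    rw [Finset.prod_mul_distrib, Finset.prod_const, Finset.card_range]
  have l2 : s^j * ∏ i ∈ range j, (m-i) = ∏ i ∈ range j, (s*(m-i)) := by
    rw [Finset.prod_mul_distrib, Finset.prod_const, Finset.card_range]
  rw [l1, l2]
  apply Finset.prod_le_prod'
  intro i _
  have h1 : (s-i)*m = s*m - i*m := Nat.sub_mul s i m
  have h2 : s*(m-i) = m*s - i*s := by rw [mul_comm s (m-i), Nat.sub_mul]
  rw [h1, h2, mul_comm s m]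
  exact Nat.sub_le_sub_left (Nat.mul_le_mul_left i h) (m*s)

lemma factorial_mul_pow_le {s j : ℕ} (hj : j ≤ s) :
    s^j * j.factorial ≤ s.descFactorial j * j^j := by
  rw [Nat.descFactorial_eq_prod_range, ← Nat.descFactorial_self,
    Nat.descFactorial_eq_prod_range]
  have l1 : s^j * ∏ i ∈ range j, (j-i) = ∏ i ∈ range j, (s*(j-i)) := by
    rw [Finset.prod_mul_distrib, Finset.prod_const, Finset.card_range]
  have l2 : (∏ i ∈ range j, (s-i)) * j^j = ∏ i ∈ range j, ((s-i)*j) := by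
    rw [Finset.prod_mul_distrib, Finset.prod_const, Finset.card_range]
  rw [l1, l2]
  apply Finset.prod_le_prod'
  intro i _
  have h1 : s*(j-i) = j*s - i*s := by rw [mul_comm s (j-i), Nat.sub_mul]
  have h2 : (s-i)*j = s*j - i*j := Nat.sub_mul s i j
  rw [h1, h2, mul_comm s j]
  exact Nat.sub_le_sub_left (Nat.mul_le_mul_left i hj) (j*s)

lemma pow_le_exp_mul_descFactorial {s j : ℕ} (hj : j ≤ s) :
    (s:ℝ)^j ≤ Real.exp j * (s.descFactorial j : ℝ) := by
  have h1 : ((j:ℝ))^j / (j.factorial : ℝ) ≤ Real.exp j := by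
    calc ((j:ℝ))^j / (j.factorial : ℝ)
        ≤ ∑ i ∈ range (j+1), (j:ℝ)^i / (i.factorial : ℝ) := by
          exact Finset.single_le_sum (f := fun i => (j:ℝ)^i / (i.factorial : ℝ))
            (fun i _ => by positivity) (Finset.self_mem_range_succ j)
      _ ≤ Real.exp j := Real.sum_le_exp_of_nonneg (by positivity) _
  have h2 : (s:ℝ)^j * (j.factorial : ℝ) ≤ (s.descFactorial j : ℝ) * (j:ℝ)^j := by
    exact_mod_cast factorial_mul_pow_le hj
  have hjf : (0:ℝ) < (j.factorial : ℝ) := by exact_mod_cast j.factorial_pos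
  calc (s:ℝ)^j = ((s:ℝ)^j * (j.factorial : ℝ)) / (j.factorial : ℝ) := by field_simp
    _ ≤ ((s.descFactorial j : ℝ) * (j:ℝ)^j) / (j.factorial : ℝ) := by
        gcongr
    _ = (s.descFactorial j : ℝ) * ((j:ℝ)^j / (j.factorial : ℝ)) := by ring
    _ ≤ (s.descFactorial j : ℝ) * Real.exp j := by
        apply mul_le_mul_of_nonneg_left h1 (by positivity)
    _ = Real.exp j * (s.descFactorial j : ℝ) := by ring

lemma choose_descFactorial_identity {k s m : ℕ} (hk : k ≤ s) (hsm : s ≤ m) :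
    (m-k).choose (s-k) * m.descFactorial k = s.descFactorial k * m.choose s := by
  have hkm : k ≤ m := le_trans hk hsm
  refine Nat.eq_of_mul_eq_mul_right
    (show 0 < (s-k).factorial * (m-s).factorial by positivity) ?_
  have e1 : (m-k).choose (s-k) * (s-k).factorial * ((m-k)-(s-k)).factorial = (m-k).factorial :=
    Nat.choose_mul_factorial_mul_factorial (by omega)
  have e2 : (m-k)-(s-k) = m-s := by omega
  have e3 : (m-k).factorial * m.descFactorial k = m.factorial :=
    Nat.factorial_mul_descFactorial hkm
  have e4 : (s-k).factorial * s.descFactorial k = s.factorial :=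
    Nat.factorial_mul_descFactorial hk
  have e5 : m.choose s * s.factorial * (m-s).factorial = m.factorial :=
    Nat.choose_mul_factorial_mul_factorial hsm
  calc (m-k).choose (s-k) * m.descFactorial k * ((s-k).factorial * (m-s).factorial)
      = ((m-k).choose (s-k) * (s-k).factorial * ((m-k)-(s-k)).factorial) * m.descFactorial k := by
        rw [e2]; ring
    _ = m.factorial := by rw [e1]; exact e3
    _ = (s.descFactorial k * m.choose s) * ((s-k).factorial * (m-s).factorial) := by
        rw [← e5, ← e4]; ring

open MeasureTheory ProbabilityTheory

noncomputable section

variable {Ω : Type} [MeasureSpace Ω] [IsProbabilityMeasure (ℙ : Measure Ω)]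

lemma integrable_of_bounded' {f : Ω → ℝ} (hm : Measurable f) (C : ℝ)
    (hb : ∀ ω, |f ω| ≤ C) : Integrable f ℙ :=
  (integrable_const C).mono' hm.aestronglyMeasurable (Filter.Eventually.of_forall hb)

namespace UnifSSCJL

variable {n m s : ℕ} (c : UnifSSCJL Ω n m s)

def A (i : Fin n) (S : Finset (Fin m)) : Set Ω := {ω | ∀ r, c.η r i ω = 1 ↔ r ∈ S}

lemma measurableSet_A (i : Fin n) (S : Finset (Fin m)) : MeasurableSet (c.A i S) := by
  have : c.A i S = ⋂ r, {ω | c.η r i ω = 1 ↔ r ∈ S} := by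
    ext ω; simp [A, Set.mem_iInter]
  rw [this]
  apply MeasurableSet.iInter
  intro r
  by_cases hr : r ∈ S
  · have : {ω | c.η r i ω = 1 ↔ r ∈ S} = c.η r i ⁻¹' {1} := by
      ext ω; simp [hr]
    rw [this]; exact (c.meas_eta r i) (measurableSet_singleton 1)
  · have : {ω | c.η r i ω = 1 ↔ r ∈ S} = (c.η r i ⁻¹' {1})ᶜ := by
      ext ω; simp [hr]
    rw [this]; exact ((c.meas_eta r i) (measurableSet_singleton 1)).compl

lemma A_unique {i : Fin n} {S T : Finset (Fin m)} {ω : Ω}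
    (hS : ω ∈ c.A i S) (hT : ω ∈ c.A i T) : S = T := by
  ext r
  rw [← hS r, ← hT r]

lemma prod_eq_indicator {i : Fin n} {S : Finset (Fin m)} {ω : Ω} (hω : ω ∈ c.A i S)
    (R : Finset (Fin m)) :
    ∏ r ∈ R, c.η r i ω = if R ⊆ S then 1 else 0 := by
  by_cases hRS : R ⊆ S
  · rw [if_pos hRS]
    apply Finset.prod_eq_one
    intro r hr
    exact (hω r).2 (hRS hr)
  · rw [if_neg hRS]
    obtain ⟨r, hrR, hrS⟩ := Finset.not_subset.1 hRS
    apply Finset.prod_eq_zero hrR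
    rcases c.eta01 r i ω with h | h
    · exact h
    · exact absurd ((hω r).1 h) hrS

lemma eta_nonneg (r : Fin m) (i : Fin n) (ω : Ω) : 0 ≤ c.η r i ω := by
  rcases c.eta01 r i ω with h | h <;> rw [h] <;> norm_num

lemma eta_le_one (r : Fin m) (i : Fin n) (ω : Ω) : c.η r i ω ≤ 1 := by
  rcases c.eta01 r i ω with h | h <;> rw [h] <;> norm_num

lemma prod_nonneg' (R : Finset (Fin m)) (i : Fin n) (ω : Ω) :
    0 ≤ ∏ r ∈ R, c.η r i ω :=
  Finset.prod_nonneg fun r _ => c.eta_nonneg r i ω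

lemma prod_le_one' (R : Finset (Fin m)) (i : Fin n) (ω : Ω) :
    ∏ r ∈ R, c.η r i ω ≤ 1 :=
  Finset.prod_le_one (fun r _ => c.eta_nonneg r i ω) (fun r _ => c.eta_le_one r i ω)

lemma meas_prod (R : Finset (Fin m)) (i : Fin n) :
    Measurable (fun ω => ∏ r ∈ R, c.η r i ω) :=
  Finset.measurable_prod R fun r _ => c.meas_eta r i

lemma integrable_prod (R : Finset (Fin m)) (i : Fin n) :
    Integrable (fun ω => ∏ r ∈ R, c.η r i ω) ℙ := by
  apply integrable_of_bounded' (c.meas_prod R i) 1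
  intro ω
  rw [abs_of_nonneg (c.prod_nonneg' R i ω)]
  exact c.prod_le_one' R i ω

lemma ae_mem_union (hms : s ≤ m) (i : Fin n) :
    ∀ᵐ ω ∂(ℙ : Measure Ω), ∃ S ∈ Finset.powersetCard s (Finset.univ : Finset (Fin m)),
      ω ∈ c.A i S := by
  set 𝒮 := Finset.powersetCard s (Finset.univ : Finset (Fin m)) with h𝒮
  have hcard : ∀ S ∈ 𝒮, S.card = s := fun S hS => (Finset.mem_powersetCard.1 hS).2
  have hprob : ∀ S ∈ 𝒮, ℙ (c.A i S) = ((m.choose s : ℕ) : ENNReal)⁻¹ :=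
    fun S hS => c.unif i S (hcard S hS)
  have hdisj : (↑𝒮 : Set (Finset (Fin m))).Pairwise (Function.onFun Disjoint (c.A i)) := by
    intro S _ T _ hST
    rw [Function.onFun, Set.disjoint_left]
    intro ω hS hT
    exact hST (c.A_unique hS hT)
  have htotal : ℙ (⋃ S ∈ 𝒮, c.A i S) = 1 := by
    rw [measure_biUnion_finset hdisj (fun S _ => c.measurableSet_A i S)]
    have : ∑ S ∈ 𝒮, ℙ (c.A i S) = 𝒮.card • ((m.choose s : ℕ) : ENNReal)⁻¹ := by
      rw [← Finset.sum_const]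
      exact Finset.sum_congr rfl hprob
    rw [this, h𝒮, Finset.card_powersetCard, Finset.card_univ, Fintype.card_fin,
      nsmul_eq_mul]
    exact ENNReal.mul_inv_cancel (by exact_mod_cast (Nat.choose_pos hms).ne')
      (ENNReal.natCast_ne_top _)
  have hcompl : ℙ (⋃ S ∈ 𝒮, c.A i S)ᶜ = 0 := by
    rw [measure_compl (Finset.measurableSet_biUnion 𝒮 (fun S _ => c.measurableSet_A i S))
      (measure_ne_top _ _), htotal, measure_univ, tsub_self]
  have := MeasureTheory.mem_ae_iff.2 hcompl
  filter_upwards [this] with ω hω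
  simpa using hω

lemma _root_.ENNReal.toReal_natCast' (k : ℕ) : ((k : ENNReal)).toReal = (k : ℝ) := by simp

lemma col_prod_integral (hms : s ≤ m) (i : Fin n) (R : Finset (Fin m)) (hR : R.card ≤ s) :
    ∫ ω, ∏ r ∈ R, c.η r i ω =
      ((m - R.card).choose (s - R.card) : ℝ) / (m.choose s : ℝ) := by
  set 𝒮 := Finset.powersetCard s (Finset.univ : Finset (Fin m)) with h𝒮
  set 𝒯 := 𝒮.filter (fun S => R ⊆ S) with h𝒯
  have hae := c.ae_mem_union hms i
  have heq : (fun ω => ∏ r ∈ R, c.η r i ω)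
      =ᵐ[ℙ] (fun ω => ∑ S ∈ 𝒯, Set.indicator (c.A i S) (fun _ => (1:ℝ)) ω) := by
    filter_upwards [hae] with ω hω
    obtain ⟨S₀, hS₀, hωS₀⟩ := hω
    rw [c.prod_eq_indicator hωS₀ R]
    by_cases hRS : R ⊆ S₀
    · rw [if_pos hRS]
      rw [Finset.sum_eq_single_of_mem S₀ (by rw [h𝒯]; exact Finset.mem_filter.2 ⟨hS₀, hRS⟩)]
      · rw [Set.indicator_of_mem hωS₀]
      · intro T _ hT
        apply Set.indicator_of_notMem
        intro hωT
        exact hT (c.A_unique hωT hωS₀)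
    · rw [if_neg hRS]
      symm
      apply Finset.sum_eq_zero
      intro T hT
      apply Set.indicator_of_notMem
      intro hωT
      rw [c.A_unique hωT hωS₀] at hT
      rw [h𝒯, Finset.mem_filter] at hT
      exact hRS hT.2
  rw [integral_congr_ae heq, integral_finset_sum _ (fun S _ =>
    (integrable_const (1:ℝ)).indicator (c.measurableSet_A i S))]
  have hint : ∀ S ∈ 𝒯, ∫ ω, Set.indicator (c.A i S) (fun _ => (1:ℝ)) ω
      = ((m.choose s : ℝ))⁻¹ := by
    intro S hS
    rw [MeasureTheory.integral_indicator_const (1:ℝ) (c.measurableSet_A i S), smul_eq_mul,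
      mul_one]
    have hcard : S.card = s := (Finset.mem_powersetCard.1 (Finset.mem_filter.1 hS).1).2
    rw [show c.A i S = {ω | ∀ r, c.η r i ω = 1 ↔ r ∈ S} from rfl, measureReal_def, c.unif i S hcard,
      ENNReal.toReal_inv, ENNReal.toReal_natCast']
  rw [Finset.sum_congr rfl hint, Finset.sum_const, nsmul_eq_mul]
  have hcount : 𝒯.card = (m - R.card).choose (s - R.card) := by
    have hcard2 : ((Finset.univ : Finset (Fin m)) \ R).card = m - R.card := by
      rw [Finset.card_sdiff_of_subset (Finset.subset_univ R), Finset.card_univ, Fintype.card_fin]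
    rw [← hcard2, ← Finset.card_powersetCard]
    apply Finset.card_nbij' (fun S => S \ R) (fun T => T ∪ R)
    · intro S hS
      rw [h𝒯, Finset.mem_coe, Finset.mem_filter] at hS
      obtain ⟨hS1, hRS⟩ := hS
      obtain ⟨hSu, hScard⟩ := Finset.mem_powersetCard.1 hS1
      rw [Finset.mem_coe, Finset.mem_powersetCard]
      constructor
      · exact Finset.sdiff_subset_sdiff hSu (le_refl R)
      · rw [Finset.card_sdiff_of_subset hRS, hScard]
    · intro T hT
      obtain ⟨hTu, hTcard⟩ := Finset.mem_powersetCard.1 hT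
      have hdisj : Disjoint T R := by
        rw [Finset.disjoint_right]
        intro r hr
        intro hrT
        have := hTu hrT
        rw [Finset.mem_sdiff] at this
        exact this.2 hr
      rw [h𝒯, Finset.mem_coe, Finset.mem_filter, Finset.mem_powersetCard]
      refine ⟨⟨Finset.subset_univ _, ?_⟩, Finset.subset_union_right⟩
      rw [Finset.card_union_of_disjoint hdisj, hTcard]
      omega
    · intro S hS
      rw [h𝒯, Finset.mem_coe, Finset.mem_filter] at hS
      beta_reduce
      rw [Finset.sdiff_union_self_eq_union, Finset.union_eq_left.2 hS.2]
    · intro T hT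
      obtain ⟨hTu, _⟩ := Finset.mem_powersetCard.1 hT
      have hdisj : Disjoint T R := by
        rw [Finset.disjoint_right]
        intro r hr hrT
        have := hTu hrT
        rw [Finset.mem_sdiff] at this
        exact this.2 hr
      beta_reduce
      rw [Finset.union_sdiff_cancel_right hdisj]
  rw [hcount]
  rw [div_eq_mul_inv]

lemma Q_pow_eq (i j : Fin n) (p : ℕ) (ω : Ω) :
    (c.Q i j ω)^p = ∑ f : Fin p → Fin m,
      (∏ r ∈ Finset.image f Finset.univ, c.η r i ω)
        * (∏ r ∈ Finset.image f Finset.univ, c.η r j ω) := by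
  have ha01 : ∀ r, c.η r i ω * c.η r j ω = 0 ∨ c.η r i ω * c.η r j ω = 1 := by
    intro r
    rcases c.eta01 r i ω with h | h
    · left; rw [h, zero_mul]
    · rcases c.eta01 r j ω with h' | h'
      · left; rw [h', mul_zero]
      · right; rw [h, h', mul_one]
  have h1 : (c.Q i j ω)^p = ∏ _t : Fin p, ∑ r : Fin m, c.η r i ω * c.η r j ω := by
    rw [Finset.prod_const, UnifSSCJL.Q]; simp
  rw [h1, Finset.prod_univ_sum]
  rw [Fintype.piFinset_univ]
  apply Finset.sum_congr rfl
  intro f _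
  rw [Finset.prod_comp (fun r => c.η r i ω * c.η r j ω) f]
  have : ∀ b ∈ Finset.image f Finset.univ,
      (c.η b i ω * c.η b j ω) ^ (Finset.univ.filter (fun a => f a = b)).card
        = c.η b i ω * c.η b j ω := by
    intro b hb
    obtain ⟨a, _, ha⟩ := Finset.mem_image.1 hb
    have hpos : 0 < (Finset.univ.filter (fun a => f a = b)).card := by
      apply Finset.card_pos.2
      exact ⟨a, Finset.mem_filter.2 ⟨Finset.mem_univ a, ha⟩⟩
    rcases ha01 b with h | h
    · rw [h, zero_pow hpos.ne']
    · rw [h, one_pow]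
  rw [Finset.prod_congr rfl this, Finset.prod_mul_distrib]

set_option maxHeartbeats 1000000 in
lemma integral_Q_pow {i j : Fin n} (hij : i ≠ j) (hms : s ≤ m) {p : ℕ} (hps : p ≤ s) :
    ∫ ω, (c.Q i j ω)^p = ∑ k ∈ range (p+1), (St p k : ℝ) * (m.descFactorial k : ℝ)
      * (((m - k).choose (s - k) : ℝ) / (m.choose s : ℝ))^2 := by
  have hterm : ∀ f : Fin p → Fin m,
      ∫ ω, (∏ r ∈ Finset.image f Finset.univ, c.η r i ω)
          * (∏ r ∈ Finset.image f Finset.univ, c.η r j ω)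
        = (((m - (Finset.image f Finset.univ).card).choose
              (s - (Finset.image f Finset.univ).card) : ℝ) / (m.choose s : ℝ))^2 := by
    intro f
    set R := Finset.image f Finset.univ with hRdef
    have hRcard : R.card ≤ s := by
      calc R.card ≤ (Finset.univ : Finset (Fin p)).card := Finset.card_image_le
        _ = p := by rw [Finset.card_univ, Fintype.card_fin]
        _ ≤ s := hps
    have hind : IndepFun (fun ω => fun r => c.η r i ω) (fun ω => fun r => c.η r j ω) ℙ :=
      c.cols_indep.indepFun hij
    have hF : Measurable (fun v : Fin m → ℝ => ∏ r ∈ R, v r) :=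
      Finset.measurable_prod R fun r _ => measurable_pi_apply r
    have hcomp := hind.comp hF hF
    have heq := hcomp.integral_fun_mul_eq_mul_integral (c.integrable_prod R i).aestronglyMeasurable
      (c.integrable_prod R j).aestronglyMeasurable
    have : ∫ ω, (∏ r ∈ R, c.η r i ω) * (∏ r ∈ R, c.η r j ω)
        = (∫ ω, ∏ r ∈ R, c.η r i ω) * (∫ ω, ∏ r ∈ R, c.η r j ω) := heq
    rw [this, c.col_prod_integral hms i R hRcard, c.col_prod_integral hms j R hRcard, sq]
  have hint : ∀ f : Fin p → Fin m, Integrable (fun ω =>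
      (∏ r ∈ Finset.image f Finset.univ, c.η r i ω)
        * (∏ r ∈ Finset.image f Finset.univ, c.η r j ω)) ℙ := by
    intro f
    apply integrable_of_bounded' (((c.meas_prod _ i)).mul ((c.meas_prod _ j))) 1
    intro ω
    rw [Pi.mul_apply, abs_mul]
    calc |∏ r ∈ Finset.image f Finset.univ, c.η r i ω|
          * |∏ r ∈ Finset.image f Finset.univ, c.η r j ω|
        ≤ 1 * 1 := by
          apply mul_le_mul
          · rw [abs_of_nonneg (c.prod_nonneg' _ i ω)]; exact c.prod_le_one' _ i ω
          · rw [abs_of_nonneg (c.prod_nonneg' _ j ω)]; exact c.prod_le_one' _ j ω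
          · exact abs_nonneg _
          · norm_num
      _ = 1 := by norm_num
  calc ∫ ω, (c.Q i j ω)^p
      = ∫ ω, ∑ f : Fin p → Fin m,
          (∏ r ∈ Finset.image f Finset.univ, c.η r i ω)
            * (∏ r ∈ Finset.image f Finset.univ, c.η r j ω) := by
        apply integral_congr_ae
        apply Filter.Eventually.of_forall
        intro ω
        exact c.Q_pow_eq i j p ω
    _ = ∑ f : Fin p → Fin m, ∫ ω,
          (∏ r ∈ Finset.image f Finset.univ, c.η r i ω)
            * (∏ r ∈ Finset.image f Finset.univ, c.η r j ω) := by
        exact integral_finset_sum _ (fun f _ => hint f)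
    _ = ∑ f : Fin p → Fin m, (fun k : ℕ =>
          (((m - k).choose (s - k) : ℝ) / (m.choose s : ℝ))^2)
          ((Finset.image f Finset.univ).card) := by
        exact Finset.sum_congr rfl (fun f _ => hterm f)
    _ = ∑ k ∈ range (p+1), (St p k : ℝ) * (m.descFactorial k : ℝ)
          * (((m - k).choose (s - k) : ℝ) / (m.choose s : ℝ))^2 := by
        simpa using sum_fun_image_card m p
          (fun k : ℕ => (((m - k).choose (s - k) : ℝ) / (m.choose s : ℝ))^2)

end UnifSSCJL

lemma binom_sum_one (s : ℕ) (α : ℝ) :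
    ∑ k ∈ range (s+1), (s.choose k : ℝ) * α^k * (1-α)^(s-k) = 1 := by
  calc ∑ k ∈ range (s+1), (s.choose k : ℝ) * α^k * (1-α)^(s-k)
      = (α + (1-α))^s := by rw [add_pow]; apply Finset.sum_congr rfl; intros; ring
    _ = 1 := by norm_num

lemma binomial_moment {Ω' : Type} [MeasureSpace Ω'] [IsProbabilityMeasure (ℙ : Measure Ω')]
    (X : Ω' → ℝ) (hXm : Measurable X) (s : ℕ) (α : ℝ) (hα0 : 0 ≤ α) (hα1 : α ≤ 1)
    (hX : HasBinomialDist X s α) (p : ℕ) :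
    ∫ ω, |X ω|^p = ∑ k ∈ range (s+1),
      (s.choose k : ℝ) * α^k * (1-α)^(s-k) * ((k:ℝ))^p := by
  set b : ℕ → ℝ := fun k => (s.choose k : ℝ) * α^k * (1-α)^(s-k) with hb
  have hbnn : ∀ k, 0 ≤ b k := by
    intro k
    have h1 : (0:ℝ) ≤ 1 - α := by linarith
    positivity
  set B : ℕ → Set Ω' := fun k => X ⁻¹' {(k:ℝ)} with hB
  have hBmeas : ∀ k, MeasurableSet (B k) := fun k => hXm (measurableSet_singleton _)
  have hBprob : ∀ k, ℙ (B k) = ENNReal.ofReal (b k) := by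
    intro k
    have := hX k
    rw [hB]
    convert this using 2
    rfl
  have htotal : ℙ (⋃ k ∈ range (s+1), B k) = 1 := by
    rw [measure_biUnion_finset ?disj (fun k _ => hBmeas k)]
    · rw [Finset.sum_congr rfl (fun k _ => hBprob k),
        ← ENNReal.ofReal_sum_of_nonneg (fun k _ => hbnn k), binom_sum_one s α,
        ENNReal.ofReal_one]
    case disj =>
      intro k _ l _ hkl
      rw [Function.onFun, Set.disjoint_left]
      intro ω hk hl
      rw [hB, Set.mem_preimage, Set.mem_singleton_iff] at hk hl
      exact hkl (Nat.cast_injective (hk.symm.trans hl))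
  have hcompl : ℙ (⋃ k ∈ range (s+1), B k)ᶜ = 0 := by
    rw [measure_compl (Finset.measurableSet_biUnion _ (fun k _ => hBmeas k))
      (measure_ne_top _ _), htotal, measure_univ, tsub_self]
  have hae := MeasureTheory.mem_ae_iff.2 hcompl
  have heq : (fun ω => |X ω|^p)
      =ᵐ[ℙ] (fun ω => ∑ k ∈ range (s+1),
        Set.indicator (B k) (fun _ => ((k:ℝ))^p) ω) := by
    filter_upwards [hae] with ω hω
    have hω' : ω ∈ ⋃ k ∈ range (s+1), B k := hω
    rw [Set.mem_iUnion₂] at hω'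
    obtain ⟨k₀, hk₀, hωk₀⟩ := hω'
    rw [hB, Set.mem_preimage, Set.mem_singleton_iff] at hωk₀
    rw [hωk₀, abs_of_nonneg (Nat.cast_nonneg k₀)]
    rw [Finset.sum_eq_single_of_mem k₀ hk₀]
    · rw [Set.indicator_of_mem (by rw [hB]; exact Set.mem_preimage.2 (by simp [hωk₀]))]
    · intro l _ hl
      apply Set.indicator_of_notMem
      rw [hB, Set.mem_preimage, Set.mem_singleton_iff, hωk₀]
      intro h
      exact hl (Nat.cast_injective h.symm)
  rw [integral_congr_ae heq, integral_finset_sum _ (fun k _ =>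
    (integrable_const _).indicator (hBmeas k))]
  apply Finset.sum_congr rfl
  intro k _
  rw [MeasureTheory.integral_indicator_const _ (hBmeas k), measureReal_def, hBprob k, smul_eq_mul,
    ENNReal.toReal_ofReal (hbnn k), mul_comm]

end
end Aux

theorem Q12_moment_comparable_to_binomial :
    ∃ c₁ c₂ : ℝ, 0 < c₁ ∧ 0 < c₂ ∧
      ∀ (Ω : Type) [MeasureSpace Ω] [IsProbabilityMeasure (ℙ : Measure Ω)]
        (n m s : ℕ) (hn : 2 ≤ n), 0 < s → s ≤ m →
        ∀ (c : UnifSSCJL Ω n m s) (p : ℕ), 1 ≤ p → p < s →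
        ∀ (Ω' : Type) [MeasureSpace Ω'] [IsProbabilityMeasure (ℙ : Measure Ω')]
          (X : Ω' → ℝ), Measurable X → HasBinomialDist X s ((s : ℝ) / m) →
          c₁ * pnorm X p ≤ pnorm (c.Q ⟨0, by omega⟩ ⟨1, by omega⟩) p ∧
            pnorm (c.Q ⟨0, by omega⟩ ⟨1, by omega⟩) p ≤ c₂ * pnorm X p := by
  refine ⟨Real.exp (-1), 1, Real.exp_pos _, one_pos, ?_⟩
  intro Ω _ _ n m s hn hs hsm c p hp1 hps Ω' _ _ X hXm hX
  have hpm : p ≤ s := le_of_lt hps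
  have hm0 : 0 < m := lt_of_lt_of_le hs hsm
  set α : ℝ := (s:ℝ)/m with hα
  have hα0 : 0 ≤ α := by positivity
  have hα1 : α ≤ 1 := by
    rw [hα, div_le_one (by exact_mod_cast hm0)]
    exact_mod_cast hsm
  set i0 : Fin n := ⟨0, by omega⟩ with hi0
  set i1 : Fin n := ⟨1, by omega⟩ with hi1
  have hij : i0 ≠ i1 := by
    intro h
    have := congrArg Fin.val h
    rw [hi0, hi1] at this
    simp at this
  have hq0 : ((p:ℝ)) ≠ 0 := by
    have : 0 < p := hp1
    positivity
  -- the X-side moment identity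
  have hEX2 : ∫ ω, |X ω|^p
      = ∑ j ∈ range (p+1), (St p j : ℝ) * (s.descFactorial j : ℝ) * α^j := by
    rw [binomial_moment X hXm s α hα0 hα1 hX p]
    have hkp : ∀ k : ℕ, ((k:ℝ))^p
        = ∑ j ∈ range (p+1), (St p j : ℝ) * (k.descFactorial j : ℝ) := by
      intro k
      have h := congrArg (fun x : ℕ => (x:ℝ)) (pow_eq_sum_St k p)
      push_cast at h
      exact h
    calc ∑ k ∈ range (s+1), (s.choose k : ℝ) * α^k * (1-α)^(s-k) * ((k:ℝ))^p
        = ∑ k ∈ range (s+1), ∑ j ∈ range (p+1),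
            (St p j : ℝ) * ((s.choose k : ℝ) * α^k * (1-α)^(s-k) * (k.descFactorial j : ℝ)) := by
          apply Finset.sum_congr rfl; intro k _
          rw [hkp k, Finset.mul_sum]
          apply Finset.sum_congr rfl; intro j _; ring
      _ = ∑ j ∈ range (p+1), (St p j : ℝ) * ∑ k ∈ range (s+1),
            ((s.choose k : ℝ) * α^k * (1-α)^(s-k) * (k.descFactorial j : ℝ)) := by
          rw [Finset.sum_comm]
          apply Finset.sum_congr rfl; intro j _
          rw [Finset.mul_sum]
      _ = ∑ j ∈ range (p+1), (St p j : ℝ) * (s.descFactorial j : ℝ) * α^j := by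
          apply Finset.sum_congr rfl; intro j hj
          rw [Finset.mem_range] at hj
          rw [binomial_descFactorial_moment s j (by omega) α]
          ring
  -- the Q-side moment identity
  have hu : ∀ j, j ≤ p → (((m - j).choose (s - j) : ℝ) / (m.choose s : ℝ))
      = (s.descFactorial j : ℝ) / (m.descFactorial j : ℝ) := by
    intro j hj
    have hjs : j ≤ s := by omega
    have hid := choose_descFactorial_identity hjs hsm
    have hC : (0:ℝ) < (m.choose s : ℝ) := by exact_mod_cast Nat.choose_pos hsm
    have hD : (0:ℝ) < (m.descFactorial j : ℝ) := by
      have : m.descFactorial j ≠ 0 := by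
        rw [Ne, Nat.descFactorial_eq_zero_iff_lt]
        omega
      exact_mod_cast Nat.pos_of_ne_zero this
    rw [div_eq_div_iff hC.ne' hD.ne']
    exact_mod_cast congrArg (fun x : ℕ => (x:ℝ)) hid
  have hEQ' : ∫ ω, (c.Q i0 i1 ω)^p = ∑ j ∈ range (p+1), (St p j : ℝ)
      * (m.descFactorial j : ℝ)
      * ((s.descFactorial j : ℝ) / (m.descFactorial j : ℝ))^2 := by
    rw [c.integral_Q_pow hij hsm hpm]
    apply Finset.sum_congr rfl
    intro j hj
    rw [Finset.mem_range] at hj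
    rw [hu j (by omega)]
  -- termwise comparison
  have keys : ∀ j ∈ range (p+1),
      (Real.exp (-1)^p * ((St p j : ℝ) * (s.descFactorial j : ℝ) * α^j)
        ≤ (St p j : ℝ) * (m.descFactorial j : ℝ)
            * ((s.descFactorial j : ℝ) / (m.descFactorial j : ℝ))^2)
      ∧ ((St p j : ℝ) * (m.descFactorial j : ℝ)
            * ((s.descFactorial j : ℝ) / (m.descFactorial j : ℝ))^2
        ≤ (St p j : ℝ) * (s.descFactorial j : ℝ) * α^j) := by
    intro j hj
    rw [Finset.mem_range] at hj
    have hjp : j ≤ p := by omega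
    have hjs : j ≤ s := by omega
    set a : ℝ := (s.descFactorial j : ℝ) with ha
    set B : ℝ := (m.descFactorial j : ℝ) with hBdef
    have hapos : (0:ℝ) < a := by
      have h : s.descFactorial j ≠ 0 := by
        rw [Ne, Nat.descFactorial_eq_zero_iff_lt]; omega
      rw [ha]
      exact_mod_cast Nat.pos_of_ne_zero h
    have hBpos : (0:ℝ) < B := by
      have h : m.descFactorial j ≠ 0 := by
        rw [Ne, Nat.descFactorial_eq_zero_iff_lt]; omega
      rw [hBdef]
      exact_mod_cast Nat.pos_of_ne_zero h
    have hmpow : (0:ℝ) < ((m:ℝ))^j := by positivity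
    have hαj : α^j = ((s:ℝ))^j / ((m:ℝ))^j := by rw [hα, div_pow]
    have hSt : (0:ℝ) ≤ (St p j : ℝ) := Nat.cast_nonneg _
    have hBM : B ≤ ((m:ℝ))^j := by
      rw [hBdef]
      exact_mod_cast Nat.descFactorial_le_pow m j
    have hcore : B * (a / B)^2 = a^2 / B := by
      field_simp
    constructor
    · -- lower bound
      have hsa : ((s:ℝ))^j ≤ Real.exp j * a := pow_le_exp_mul_descFactorial hjs
      have hexp : Real.exp (-1)^p = Real.exp (-(p:ℝ)) := by
        rw [← Real.exp_nat_mul]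
        norm_num
      have h2 : Real.exp (-(p:ℝ)) * ((s:ℝ))^j ≤ a := by
        calc Real.exp (-(p:ℝ)) * ((s:ℝ))^j
            ≤ Real.exp (-(p:ℝ)) * (Real.exp j * a) := by
              apply mul_le_mul_of_nonneg_left hsa (Real.exp_pos _).le
          _ = Real.exp (-(p:ℝ) + (j:ℝ)) * a := by
              rw [Real.exp_add]; ring
          _ ≤ 1 * a := by
              apply mul_le_mul_of_nonneg_right _ hapos.le
              apply Real.exp_le_one_iff.2
              have : (j:ℝ) ≤ (p:ℝ) := by exact_mod_cast hjp
              linarith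
          _ = a := one_mul a
      calc Real.exp (-1)^p * ((St p j : ℝ) * a * α^j)
          = (St p j : ℝ) * ((Real.exp (-(p:ℝ)) * ((s:ℝ))^j) * a / ((m:ℝ))^j) := by
            rw [hexp, hαj]; ring
        _ ≤ (St p j : ℝ) * (a * a / ((m:ℝ))^j) := by
            apply mul_le_mul_of_nonneg_left _ hSt
            have hnum : (Real.exp (-(p:ℝ)) * ((s:ℝ))^j) * a ≤ a * a :=
              mul_le_mul_of_nonneg_right h2 hapos.le
            gcongr
        _ = (St p j : ℝ) * (a^2 / ((m:ℝ))^j) := by ring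
        _ ≤ (St p j : ℝ) * (a^2 / B) := by
            apply mul_le_mul_of_nonneg_left _ hSt
            exact div_le_div_of_nonneg_left (by positivity) hBpos hBM
        _ = (St p j : ℝ) * (B * (a / B)^2) := by rw [hcore]
        _ = (St p j : ℝ) * B * (a / B)^2 := by ring
    · -- upper bound
      have h1 : a * ((m:ℝ))^j ≤ ((s:ℝ))^j * B := by
        rw [ha, hBdef]
        exact_mod_cast descFact_mul_pow_le hsm j
      calc (St p j : ℝ) * B * (a / B)^2
          = (St p j : ℝ) * (a^2 / B) := by rw [mul_assoc, hcore]
        _ ≤ (St p j : ℝ) * (a * α^j) := by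
            apply mul_le_mul_of_nonneg_left _ hSt
            rw [hαj]
            have hrw : a * (((s:ℝ))^j / ((m:ℝ))^j) = a * ((s:ℝ))^j / ((m:ℝ))^j := by ring
            rw [hrw, div_le_div_iff₀ hBpos hmpow]
            nlinarith [mul_le_mul_of_nonneg_left h1 hapos.le]
        _ = (St p j : ℝ) * a * α^j := by ring
  -- nonnegativity of the moments
  have hQnn : ∀ ω, 0 ≤ c.Q i0 i1 ω := by
    intro ω
    apply Finset.sum_nonneg
    intro r _
    exact mul_nonneg (c.eta_nonneg r i0 ω) (c.eta_nonneg r i1 ω)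
  have hEQnn : 0 ≤ ∫ ω, (c.Q i0 i1 ω)^p :=
    integral_nonneg fun ω => pow_nonneg (hQnn ω) p
  have hEXnn : 0 ≤ ∫ ω, |X ω|^p :=
    integral_nonneg fun ω => pow_nonneg (abs_nonneg _) p
  -- pnorm as integral of natural powers
  have hpnQ : pnorm (c.Q i0 i1) (p:ℝ) = (∫ ω, (c.Q i0 i1 ω)^p)^(1/(p:ℝ)) := by
    have hpt : ∀ ω, |c.Q i0 i1 ω| ^ ((p:ℕ):ℝ) = (c.Q i0 i1 ω)^p := fun ω => by
      rw [Real.rpow_natCast, abs_of_nonneg (hQnn ω)]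
    have hiq : (∫ ω, |c.Q i0 i1 ω| ^ ((p:ℕ):ℝ)) = ∫ ω, (c.Q i0 i1 ω)^p :=
      integral_congr_ae (Filter.Eventually.of_forall hpt)
    rw [pnorm, hiq]
  have hpnX : pnorm X (p:ℝ) = (∫ ω, |X ω|^p)^(1/(p:ℝ)) := by
    have hpt : ∀ ω, |X ω| ^ ((p:ℕ):ℝ) = |X ω|^p := fun ω => by
      rw [Real.rpow_natCast]
    have hiq : (∫ ω, |X ω| ^ ((p:ℕ):ℝ)) = ∫ ω, |X ω|^p :=
      integral_congr_ae (Filter.Eventually.of_forall hpt)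
    rw [pnorm, hiq]
  -- the two moment inequalities
  have hle : ∫ ω, (c.Q i0 i1 ω)^p ≤ ∫ ω, |X ω|^p := by
    rw [hEQ', hEX2]
    exact Finset.sum_le_sum fun j hj => (keys j hj).2
  have hge : Real.exp (-1)^p * ∫ ω, |X ω|^p ≤ ∫ ω, (c.Q i0 i1 ω)^p := by
    rw [hEQ', hEX2, Finset.mul_sum]
    exact Finset.sum_le_sum fun j hj => (keys j hj).1
  constructor
  · -- lower bound on pnorm Q
    rw [hpnQ, hpnX]
    calc Real.exp (-1) * ((∫ ω, |X ω|^p)^(1/(p:ℝ)))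
        = (Real.exp (-1)^p * ∫ ω, |X ω|^p)^(1/(p:ℝ)) := by
          rw [Real.mul_rpow (by positivity) hEXnn]
          congr 1
          rw [← Real.rpow_natCast (Real.exp (-1)) p, ← Real.rpow_mul (Real.exp_pos _).le,
            mul_one_div_cancel hq0, Real.rpow_one]
      _ ≤ (∫ ω, (c.Q i0 i1 ω)^p)^(1/(p:ℝ)) := by
          apply Real.rpow_le_rpow _ hge (by positivity)
          positivity
  · -- upper bound on pnorm Q
    rw [hpnQ, hpnX, one_mul]
    exact Real.rpow_le_rpow hEQnn hle (by positivity)
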